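/- For any propositional disjunctive logic program P, D-WFS*(P) = D-WFS*(res*(P)), i.e., P is equivalent to its strong residual program under the semantics D-WFS*. -/

import Mathlib

open scoped Classical

namespace DLP

/-- A (propositional) rule `a₁ ∨ ⋯ ∨ aₙ ← b₁, …, bₘ, not c₁, …, not cₜ`,
with head atoms `head`, positive body atoms `bodyPos` and (default-)negated
body atoms `bodyNeg` (heads and bodies are sets of literals). -/
structure Rule (Atom : Type) where
  head : Finset Atom
  bodyPos : Finset Atom
  bodyNeg : Finset Atom

/-- A pure disjunction: a (positive) disjunction of atoms, or a (negative)
disjunction of default-negated atoms. -/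
inductive PDisj (Atom : Type) where
  | pos : Finset Atom → PDisj Atom
  | neg : Finset Atom → PDisj Atom

/-- The atoms occurring in a pure disjunction. -/
def PDisj.atomsOf {Atom : Type} : PDisj Atom → Finset Atom
  | .pos A => A
  | .neg A => A

/-- Sub-disjunction relation between pure disjunctions (same polarity). -/
def SubDisj {Atom : Type} : PDisj Atom → PDisj Atom → Prop
  | .pos A, .pos B => A ⊆ B
  | .neg A, .neg B => A ⊆ B
  | .pos _, .neg _ => False
  | .neg _, .pos _ => False

/-- A disjunctive logic program: a set of rules (over a finite atom alphabet,
so every program is finite). -/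
abbrev Program (Atom : Type) := Set (Rule Atom)

variable {Atom : Type} [Fintype Atom] [DecidableEq Atom]

/-- Well-formedness: every rule head is nonempty (n > 0). -/
def IsProgram (P : Program Atom) : Prop := ∀ r ∈ P, r.head.Nonempty

/-- The atoms occurring in rule heads of `P`. -/
def heads (P : Program Atom) : Set Atom := {a | ∃ r ∈ P, a ∈ r.head}

/-- Closure of a set of pure disjunctions under super-disjunctions
(model states are assumed closed under implication of pure disjunctions). -/
def stClosure (S : Set (PDisj Atom)) : Set (PDisj Atom) := {d' | ∃ d ∈ S, SubDisj d d'}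

/-- A model state: a set of (nonempty) pure disjunctions closed under
super-disjunctions. -/
def IsModelState (S : Set (PDisj Atom)) : Prop :=
  (∀ d ∈ S, (PDisj.atomsOf d).Nonempty) ∧ ∀ d ∈ S, ∀ d', SubDisj d d' → d' ∈ S

/-- Consistency of a model state. -/
def ConsistentState (S : Set (PDisj Atom)) : Prop :=
  (¬ ∃ A : Finset Atom, A.Nonempty ∧ PDisj.pos A ∈ S ∧ ∀ a ∈ A, PDisj.neg {a} ∈ S) ∧
  (¬ ∃ A : Finset Atom, A.Nonempty ∧ PDisj.neg A ∈ S ∧ ∀ a ∈ A, PDisj.pos {a} ∈ S)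

/-! ### Classical inference for (positive) programs -/

/-- An interpretation `I` satisfies a rule (read classically). -/
def SatisfiesRule (I : Set Atom) (r : Rule Atom) : Prop :=
  ((↑r.bodyPos : Set Atom) ⊆ I ∧ ∀ c ∈ r.bodyNeg, c ∉ I) → ∃ a ∈ r.head, a ∈ I

/-- Classical propositional entailment of a positive disjunction from a program. -/
def Entails (P : Program Atom) (A : Finset Atom) : Prop :=
  ∀ I : Set Atom, (∀ r ∈ P, SatisfiesRule I r) → ∃ a ∈ A, a ∈ I

/-- The least model state of a positive program: all entailed positive disjunctions. -/
def msState (P : Program Atom) : Set (Finset Atom) := {A | A.Nonempty ∧ Entails P A}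

/-- Canonical form: the minimal disjunctions of `S`. -/
def canonical (S : Set (Finset Atom)) : Set (Finset Atom) := {A | A ∈ S ∧ ¬ ∃ A' ∈ S, A' ⊂ A}

/-! ### Argumentation: hypotheses, support, attack, WFDS -/

/-- A hypothesis: a set of (nonempty) negative disjunctions, each represented
by its finite set of atoms. -/
def IsHyp (Δ : Set (Finset Atom)) : Prop := ∀ D ∈ Δ, D.Nonempty

/-- The reduct `P⁺_Δ` of `P` with respect to a hypothesis `Δ`. -/
def reduct (P : Program Atom) (Δ : Set (Finset Atom)) : Program Atom :=
  {r' | ∃ r ∈ P, (∀ c ∈ r.bodyNeg, ({c} : Finset Atom) ∈ Δ) ∧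
    r' = ⟨r.head, r.bodyPos, ∅⟩}

/-- `Δ ⊢_P A`: `Δ` is a supporting hypothesis for the positive disjunction `A`. -/
def Supports (P : Program Atom) (Δ : Set (Finset Atom)) (A : Finset Atom) : Prop :=
  ∃ B : Finset Atom, (∀ b ∈ B, ({b} : Finset Atom) ∈ Δ) ∧
    A ∪ B ∈ canonical (msState (reduct P Δ))

/-- Attack relation, parameterized by a support relation `sup`. -/
def AttacksWith (sup : Set (Finset Atom) → Finset Atom → Prop)
    (Δ Δ' : Set (Finset Atom)) : Prop :=
  (∃ β ∈ Δ', β.Nonempty ∧ ∀ b ∈ β, sup Δ {b}) ∨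
  (∃ B : Finset Atom, B.Nonempty ∧ (∀ b ∈ B, ({b} : Finset Atom) ∈ Δ') ∧ sup Δ B)

/-- The assumption `not a` is admissible with respect to `Δ`. -/
def AdmissibleWith (sup : Set (Finset Atom) → Finset Atom → Prop)
    (Δ : Set (Finset Atom)) (a : Atom) : Prop :=
  ∀ Δ' : Set (Finset Atom), IsHyp Δ' →
    AttacksWith sup Δ' {({a} : Finset Atom)} → AttacksWith sup Δ Δ'

/-- The operator `A_P`. -/
def AOpWith (sup : Set (Finset Atom) → Finset Atom → Prop)
    (Δ : Set (Finset Atom)) : Set (Finset Atom) :=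
  {D | D.Nonempty ∧ ∃ a ∈ D, AdmissibleWith sup Δ a}

/-- The well-founded disjunctive hypothesis: least fixpoint of `A_P`
(obtained by iteration from the empty hypothesis). -/
def WFDHWith (sup : Set (Finset Atom) → Finset Atom → Prop) : Set (Finset Atom) :=
  ⋃ k : ℕ, (AOpWith sup)^[k] ∅

/-- The induced well-founded model state `WFDH ∪ cons(WFDH)`
(closed under super-disjunctions). -/
def WFDSWith (sup : Set (Finset Atom) → Finset Atom → Prop) : Set (PDisj Atom) :=
  stClosure ({d | ∃ D ∈ WFDHWith sup, d = PDisj.neg D} ∪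
    {d | ∃ A : Finset Atom, A.Nonempty ∧ sup (WFDHWith sup) A ∧ d = PDisj.pos A})

/-- The attack relation `⇝_P` of `P`. -/
def Attacks (P : Program Atom) : Set (Finset Atom) → Set (Finset Atom) → Prop :=
  AttacksWith (Supports P)

/-- `WFDH(P)`. -/
def WFDH (P : Program Atom) : Set (Finset Atom) := WFDHWith (Supports P)

/-- `WFDS(P)`, the argumentation-based well-founded semantics. -/
def WFDS (P : Program Atom) : Set (PDisj Atom) := WFDSWith (Supports P)

/-! ### The hyperresolution operator `T^S` and the alternative semantics WFDS' -/

/-- The immediate consequence operator `T_Q^S` of a positive program `Q`. -/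
def TS (Q : Program Atom) (J : Set (Finset Atom)) : Set (Finset Atom) :=
  {A | ∃ r ∈ Q, ∃ f : Atom → Finset Atom,
    (∀ b ∈ r.bodyPos, insert b (f b) ∈ J) ∧ A = r.head ∪ r.bodyPos.biUnion f}

/-- `T_Q^S ↑ ω`. -/
def TSomega (Q : Program Atom) : Set (Finset Atom) := ⋃ k : ℕ, (TS Q)^[k] ∅

/-- `Δ ⊢'_P A`: support via the fixpoint of the hyperresolution operator. -/
def Supports' (P : Program Atom) (Δ : Set (Finset Atom)) (A : Finset Atom) : Prop :=
  ∃ B : Finset Atom, (∀ b ∈ B, ({b} : Finset Atom) ∈ Δ) ∧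
    A ∪ B ∈ TSomega (reduct P Δ)

/-- `WFDS'(P)`: as `WFDS(P)` but with `⊢_P` replaced by `⊢'_P` throughout. -/
def WFDS' (P : Program Atom) : Set (PDisj Atom) := WFDSWith (Supports' P)

/-! ### Program transformations -/

/-- `r'` is an implication of `r`. -/
def Implication (r' r : Rule Atom) : Prop :=
  r.head ⊆ r'.head ∧ r.bodyPos ⊆ r'.bodyPos ∧ r.bodyNeg ⊆ r'.bodyNeg ∧
    (r.head ⊂ r'.head ∨ r.bodyPos ⊂ r'.bodyPos ∨ r.bodyNeg ⊂ r'.bodyNeg)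

/-- `r'` is an s-implication of `r`: `r' ≠ r` and either `r'` is an implication of `r`,
or `r` can be obtained from `r'` by changing some negative body literals of `r'`
into head atoms and possibly removing some body literals. -/
def SImplication (r' r : Rule Atom) : Prop :=
  r' ≠ r ∧ (Implication r' r ∨
    ∃ V ⊆ r'.bodyNeg, r.head = r'.head ∪ V ∧ r.bodyPos ⊆ r'.bodyPos ∧
      r.bodyNeg ⊆ r'.bodyNeg \ V)

/-- Unfolding. -/
def Unfolding (P1 P2 : Program Atom) : Prop :=
  ∃ r ∈ P1, ∃ b ∈ r.bodyPos,
    P2 = (P1 \ {r}) ∪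
      {r'' | ∃ r' ∈ P1, b ∈ r'.head ∧
        r'' = ⟨r.head ∪ r'.head.erase b, r.bodyPos.erase b ∪ r'.bodyPos,
               r.bodyNeg ∪ r'.bodyNeg⟩}

/-- Elimination of tautologies. -/
def ElimTaut (P1 P2 : Program Atom) : Prop :=
  ∃ r ∈ P1, (r.head ∩ r.bodyPos).Nonempty ∧ P2 = P1 \ {r}

/-- Elimination of s-implications. -/
def ElimSImpl (P1 P2 : Program Atom) : Prop :=
  ∃ r' ∈ P1, (∃ r ∈ P1, SImplication r' r) ∧ P2 = P1 \ {r'}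

/-- Elimination of nonminimal rules. -/
def ElimNonmin (P1 P2 : Program Atom) : Prop :=
  ∃ r' ∈ P1, (∃ r ∈ P1, r' ≠ r ∧ Implication r' r) ∧ P2 = P1 \ {r'}

/-- Positive reduction. -/
def PosRed (P1 P2 : Program Atom) : Prop :=
  ∃ r ∈ P1, ∃ c ∈ r.bodyNeg, c ∉ heads P1 ∧
    P2 = (P1 \ {r}) ∪ {(⟨r.head, r.bodyPos, r.bodyNeg.erase c⟩ : Rule Atom)}

/-- Negative reduction. -/
def NegRed (P1 P2 : Program Atom) : Prop :=
  ∃ r ∈ P1, (∃ r' ∈ P1, r'.bodyPos = ∅ ∧ r'.bodyNeg = ∅ ∧ r'.head ⊆ r.bodyNeg) ∧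
    P2 = P1 \ {r}

/-! ### BD-semantics and the transformation-based semantics -/

/-- An (abstract) BD-semantics. -/
structure BDSemantics (Atom : Type) [Fintype Atom] [DecidableEq Atom] where
  sem : Program Atom → Set (PDisj Atom)
  nonempty_mem : ∀ P : Program Atom, IsProgram P → ∀ d ∈ sem P, (PDisj.atomsOf d).Nonempty
  closed : ∀ P : Program Atom, IsProgram P → ∀ d ∈ sem P, ∀ d', SubDisj d d' → d' ∈ sem P
  fact_mem : ∀ P : Program Atom, IsProgram P → ∀ r ∈ P, r.bodyPos = ∅ → r.bodyNeg = ∅ →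
    PDisj.pos r.head ∈ sem P
  neg_mem : ∀ P : Program Atom, IsProgram P → ∀ a : Atom, a ∉ heads P →
    PDisj.neg {a} ∈ sem P

/-- A BD-semantics `S` allows (is invariant under) a program transformation `T`. -/
def Allows (S : BDSemantics Atom) (T : Program Atom → Program Atom → Prop) : Prop :=
  ∀ P1 P2 : Program Atom, IsProgram P1 → IsProgram P2 → T P1 P2 → S.sem P1 = S.sem P2

/-- `S` allows all program transformations in `T*_WFS`. -/
def AllowsStar (S : BDSemantics Atom) : Prop :=
  Allows S Unfolding ∧ Allows S ElimTaut ∧ Allows S ElimSImpl ∧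
    Allows S PosRed ∧ Allows S NegRed

/-- `S` allows all program transformations in `T_WFS`. -/
def AllowsWFSset (S : BDSemantics Atom) : Prop :=
  Allows S Unfolding ∧ Allows S ElimTaut ∧ Allows S ElimNonmin ∧
    Allows S PosRed ∧ Allows S NegRed

/-- `D-WFS*`: the weakest BD-semantics allowing all transformations in `T*_WFS`. -/
def DWFSstar (P : Program Atom) : Set (PDisj Atom) :=
  ⋂ S ∈ {S : BDSemantics Atom | AllowsStar S}, S.sem P

/-- `D-WFS`: the weakest BD-semantics allowing all transformations in `T_WFS`. -/
def DWFS (P : Program Atom) : Set (PDisj Atom) :=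
  ⋂ S ∈ {S : BDSemantics Atom | AllowsWFSset S}, S.sem P

/-! ### The least fixpoint transformation and the strong residual program -/

/-- The generalized consequence operator `T_P^G` on sets of conditional facts. -/
def TG (P : Program Atom) (J : Set (Rule Atom)) : Set (Rule Atom) :=
  {C | ∃ r ∈ P, ∃ hf : Atom → Finset Atom, ∃ bf : Atom → Finset Atom,
    (∀ b ∈ r.bodyPos, (⟨insert b (hf b), ∅, bf b⟩ : Rule Atom) ∈ J) ∧
    C = ⟨r.head ∪ r.bodyPos.biUnion hf, ∅, r.bodyNeg ∪ r.bodyPos.biUnion bf⟩}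

/-- The least fixpoint transformation `Lft(P) = T_P^G ↑ ω`, a negative program. -/
def Lft (P : Program Atom) : Program Atom := ⋃ k : ℕ, (TG P)^[k] ∅

/-- The strong reduction operator `R*` on negative programs. -/
noncomputable def Rstar (N : Program Atom) : Program Atom :=
  {r' | ∃ r ∈ N, (¬ ∃ r'' ∈ N, SImplication r r'') ∧
    r' = ⟨r.head, r.bodyPos, r.bodyNeg.filter (fun c => c ∈ heads N)⟩}

/-- The strong residual program `res*(P)`: the fixpoint reached by iterating `R*`
starting from `Lft(P)`. -/
noncomputable def resStar (P : Program Atom) : Program Atom :=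
  if h : ∃ k : ℕ, Rstar ((Rstar (Atom := Atom))^[k] (Lft P)) = (Rstar (Atom := Atom))^[k] (Lft P)
  then (Rstar (Atom := Atom))^[Nat.find h] (Lft P)
  else ∅

/-! ### Unfounded sets -/

/-- `body(r)` is true with respect to the model state `S`. -/
def BodyTrue (S : Set (PDisj Atom)) (r : Rule Atom) : Prop :=
  (∀ b ∈ r.bodyPos, PDisj.pos {b} ∈ S) ∧ (∀ c ∈ r.bodyNeg, PDisj.neg {c} ∈ S)

/-- `body(r)` is false with respect to the model state `S`. -/
def BodyFalse (S : Set (PDisj Atom)) (r : Rule Atom) : Prop :=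
  (∃ b ∈ r.bodyPos, PDisj.neg {b} ∈ S) ∨ (∃ c ∈ r.bodyNeg, PDisj.pos {c} ∈ S) ∨
  (∃ A : Finset Atom, A.Nonempty ∧ A ⊆ r.bodyNeg ∧ PDisj.pos A ∈ S)

/-- `X` is an unfounded set for `P` with respect to the model state `S`. -/
def Unfounded (P : Program Atom) (S : Set (PDisj Atom)) (X : Set Atom) : Prop :=
  ∀ a ∈ X, ∀ r ∈ P, a ∈ r.head →
    BodyFalse S r ∨ (∃ x ∈ X, x ∈ r.bodyPos) ∨
    (BodyTrue S r → ∃ A : Finset Atom, A.Nonempty ∧ (↑A : Set Atom) ⊆ (↑r.head : Set Atom) \ X ∧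
      PDisj.pos A ∈ S)

/-- The candidate greatest unfounded set: the union of all unfounded sets
(it is the greatest unfounded set exactly when it is itself unfounded). -/
def UP (P : Program Atom) (S : Set (PDisj Atom)) : Set Atom := ⋃₀ {X | Unfounded P S X}

/-- The operator `T_P` on model states. -/
def TPop (P : Program Atom) (S : Set (PDisj Atom)) : Set (Finset Atom) :=
  {A | A.Nonempty ∧ ∃ r ∈ P, BodyTrue S r ∧ A ⊆ r.head ∧
    ∀ a ∈ r.head, a ∉ A → PDisj.neg {a} ∈ S}

/-- The operator `W_P(S) = T_P(S) ∪ not.U_P(S)`. -/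
def WP (P : Program Atom) (S : Set (PDisj Atom)) : Set (PDisj Atom) :=
  {d | ∃ A ∈ TPop P S, d = PDisj.pos A} ∪ {d | ∃ p ∈ UP P S, d = PDisj.neg ({p} : Finset Atom)}

/-- The sequence `W_0 = ∅`, `W_k = W_P(W_{k-1})`. -/
def Wseq (P : Program Atom) (k : ℕ) : Set (PDisj Atom) := (WP P)^[k] ∅

/-- `U-WFS(P)`: the least fixpoint of `W_P` (closed under super-disjunctions). -/
def UWFS (P : Program Atom) : Set (PDisj Atom) := stClosure (⋃ k : ℕ, Wseq P k)


/-! ### Auxiliary material for the proof -/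

section Aux

variable {Atom : Type} [Fintype Atom] [DecidableEq Atom]

lemma Rule.ext' {r s : Rule Atom} (h1 : r.head = s.head)
    (h2 : r.bodyPos = s.bodyPos) (h3 : r.bodyNeg = s.bodyNeg) : r = s := by
  cases r; cases s; simp_all

instance : Finite (Rule Atom) :=
  Finite.of_injective (fun r : Rule Atom => (r.head, r.bodyPos, r.bodyNeg))
    (by rintro ⟨a, b, c⟩ ⟨d, e, f⟩ h; simpa using h)

/-- Rank used to order s-implications. -/
def rk (r : Rule Atom) : ℕ :=
  (2 * Fintype.card Atom + 1) * r.bodyNeg.card + r.head.card + r.bodyPos.card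

lemma rk_lt_of_simpl {s w : Rule Atom} (h : SImplication s w) : rk w < rk s := by
  have bh : w.head.card ≤ Fintype.card Atom := Finset.card_le_univ _
  have bp : w.bodyPos.card ≤ Fintype.card Atom := Finset.card_le_univ _
  obtain ⟨hne, h | ⟨V, hV, hh, hbp, hbn⟩⟩ := h
  · obtain ⟨h1, h2, h3, hp⟩ := h
    have c1 : w.head.card ≤ s.head.card := Finset.card_le_card h1
    have c2 : w.bodyPos.card ≤ s.bodyPos.card := Finset.card_le_card h2
    have c3 : w.bodyNeg.card ≤ s.bodyNeg.card := Finset.card_le_card h3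
    have hs : w.head.card < s.head.card ∨ w.bodyPos.card < s.bodyPos.card ∨
        w.bodyNeg.card < s.bodyNeg.card := by
      rcases hp with hp | hp | hp
      exacts [Or.inl (Finset.card_lt_card hp), Or.inr (Or.inl (Finset.card_lt_card hp)),
        Or.inr (Or.inr (Finset.card_lt_card hp))]
    unfold rk
    rcases hs with hs | hs | hs
    · nlinarith
    · nlinarith
    · nlinarith
  · rcases Finset.eq_empty_or_nonempty V with rfl | hVne
    · have hh' : w.head = s.head := by simpa using hh
      have hbn' : w.bodyNeg ⊆ s.bodyNeg := by simpa using hbn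
      have c2 : w.bodyPos.card ≤ s.bodyPos.card := Finset.card_le_card hbp
      have c3 : w.bodyNeg.card ≤ s.bodyNeg.card := Finset.card_le_card hbn'
      have hs : w.bodyPos.card < s.bodyPos.card ∨ w.bodyNeg.card < s.bodyNeg.card := by
        by_contra hc
        push_neg at hc
        obtain ⟨u1, u2⟩ := hc
        have e2 : w.bodyPos = s.bodyPos := Finset.eq_of_subset_of_card_le hbp u1
        have e3 : w.bodyNeg = s.bodyNeg := Finset.eq_of_subset_of_card_le hbn' u2
        exact hne (Rule.ext' hh' e2 e3).symm
      unfold rk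
      rw [hh']
      rcases hs with hs | hs <;> nlinarith
    · have hVc : 1 ≤ V.card := Finset.card_pos.mpr hVne
      have hVs : V.card ≤ s.bodyNeg.card := Finset.card_le_card hV
      have cw : w.bodyNeg.card ≤ s.bodyNeg.card - V.card := by
        have := Finset.card_le_card hbn
        rwa [Finset.card_sdiff_of_subset hV] at this
      have hlt : w.bodyNeg.card + 1 ≤ s.bodyNeg.card := by omega
      have h1 : rk w ≤ (2 * Fintype.card Atom + 1) * w.bodyNeg.card
          + Fintype.card Atom + Fintype.card Atom := by unfold rk; omega
      have h2 : (2 * Fintype.card Atom + 1) * (w.bodyNeg.card + 1)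
          ≤ (2 * Fintype.card Atom + 1) * s.bodyNeg.card := Nat.mul_le_mul_left _ hlt
      have h3 : (2 * Fintype.card Atom + 1) * s.bodyNeg.card ≤ rk s := by unfold rk; omega
      have h4 : (2 * Fintype.card Atom + 1) * (w.bodyNeg.card + 1)
          = (2 * Fintype.card Atom + 1) * w.bodyNeg.card + 2 * Fintype.card Atom + 1 := by
        ring
      omega

lemma IsProgram.mono {Q Q' : Program Atom} (h : Q' ⊆ Q) (hQ : IsProgram Q) :
    IsProgram Q' := fun r hr => hQ r (h hr)

lemma isProgram_union {Q Q' : Program Atom} (h : IsProgram Q) (h' : IsProgram Q') :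
    IsProgram (Q ∪ Q') := by
  rintro r (hr | hr)
  exacts [h r hr, h' r hr]

/-- The set of resolvents of `r` on `b` against a program, as in `Unfolding`. -/
def resSet (Q : Program Atom) (r : Rule Atom) (b : Atom) : Program Atom :=
  {r'' | ∃ r' ∈ Q, b ∈ r'.head ∧
    r'' = ⟨r.head ∪ r'.head.erase b, r.bodyPos.erase b ∪ r'.bodyPos,
           r.bodyNeg ∪ r'.bodyNeg⟩}

lemma isProgram_resSet {Q : Program Atom} {r : Rule Atom} {b : Atom}
    (hQ : IsProgram Q) (hr : r ∈ Q) : IsProgram (resSet Q r b) := by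
  rintro r'' ⟨r', hr', hb, rfl⟩
  obtain ⟨a, ha⟩ := hQ r hr
  exact ⟨a, Finset.mem_union_left _ ha⟩

section Sem

variable (S : BDSemantics Atom) (hS : AllowsStar S)
include hS

lemma sem_unfold {Q : Program Atom} {r : Rule Atom} {b : Atom}
    (hQ : IsProgram Q) (hr : r ∈ Q) (hb : b ∈ r.bodyPos) :
    S.sem Q = S.sem ((Q \ {r}) ∪ resSet Q r b) := by
  refine hS.1 _ _ hQ ?_ ⟨r, hr, b, hb, rfl⟩
  exact isProgram_union (hQ.mono Set.diff_subset) (isProgram_resSet hQ hr)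

lemma sem_taut {Q : Program Atom} {r : Rule Atom}
    (hQ : IsProgram Q) (hr : r ∈ Q) (ht : (r.head ∩ r.bodyPos).Nonempty) :
    S.sem Q = S.sem (Q \ {r}) :=
  hS.2.1 _ _ hQ (hQ.mono Set.diff_subset) ⟨r, hr, ht, rfl⟩

lemma sem_simpl {Q : Program Atom} {r w : Rule Atom}
    (hQ : IsProgram Q) (hr : r ∈ Q) (hw : w ∈ Q) (hsw : SImplication r w) :
    S.sem Q = S.sem (Q \ {r}) :=
  hS.2.2.1 _ _ hQ (hQ.mono Set.diff_subset) ⟨r, hr, ⟨w, hw, hsw⟩, rfl⟩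

lemma sem_posred {Q : Program Atom} {r : Rule Atom} {c : Atom}
    (hQ : IsProgram Q) (hr : r ∈ Q) (hc : c ∈ r.bodyNeg) (hch : c ∉ heads Q) :
    S.sem Q = S.sem ((Q \ {r}) ∪ {(⟨r.head, r.bodyPos, r.bodyNeg.erase c⟩ : Rule Atom)}) := by
  refine hS.2.2.2.1 _ _ hQ ?_ ⟨r, hr, c, hc, hch, rfl⟩
  refine isProgram_union (hQ.mono Set.diff_subset) ?_
  rintro r' hr'
  rcases hr' with rfl
  exact hQ r hr

/-- Batch elimination of s-implications. -/
lemma sem_delK : ∀ (k : ℕ) (Q K : Program Atom), IsProgram Q → K ⊆ Q →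
    (∀ s ∈ K, ∃ w ∈ Q, SImplication s w) → (Set.toFinite K).toFinset.card ≤ k →
    S.sem Q = S.sem (Q \ K) := by
  intro k
  induction k with
  | zero =>
    intro Q K hQ hKQ hwit hcard
    have hK : K = ∅ := by
      have := Finset.card_eq_zero.mp (Nat.le_zero.mp hcard)
      simpa [Set.Finite.toFinset_eq_empty] using this
    rw [hK, Set.diff_empty]
  | succ k ih =>
    intro Q K hQ hKQ hwit hcard
    rcases K.eq_empty_or_nonempty with rfl | hKne
    · rw [Set.diff_empty]
    · have hFne : ((Set.toFinite K).toFinset).Nonempty := by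
        obtain ⟨x, hx⟩ := hKne
        exact ⟨x, (Set.Finite.mem_toFinset _).mpr hx⟩
      obtain ⟨r, hrF, hrmax⟩ := Finset.exists_max_image (Set.toFinite K).toFinset rk hFne
      have hrK : r ∈ K := (Set.Finite.mem_toFinset _).mp hrF
      obtain ⟨w, hwQ, hsw⟩ := hwit r hrK
      have h1 : S.sem Q = S.sem (Q \ {r}) := sem_simpl S hS hQ (hKQ hrK) hwQ hsw
      have h2 : S.sem (Q \ {r}) = S.sem ((Q \ {r}) \ (K \ {r})) := by
        refine ih (Q \ {r}) (K \ {r}) (hQ.mono Set.diff_subset)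
          (Set.diff_subset_diff_left hKQ) ?_ ?_
        · rintro s ⟨hsK, hsr⟩
          obtain ⟨w', hw'Q, hsw'⟩ := hwit s hsK
          refine ⟨w', ⟨hw'Q, ?_⟩, hsw'⟩
          have hlt : rk w' < rk s := rk_lt_of_simpl hsw'
          have hle : rk s ≤ rk r := hrmax s ((Set.Finite.mem_toFinset _).mpr hsK)
          intro hcon
          rw [Set.mem_singleton_iff] at hcon
          subst hcon
          omega
        · have hsub : (Set.toFinite (K \ {r})).toFinset ⊆
              ((Set.toFinite K).toFinset).erase r := by
            intro x hx
            rw [Set.Finite.mem_toFinset] at hx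
            exact Finset.mem_erase.mpr ⟨hx.2, (Set.Finite.mem_toFinset _).mpr hx.1⟩
          have := Finset.card_le_card hsub
          have hce := Finset.card_erase_of_mem hrF
          omega
      have h3 : (Q \ {r}) \ (K \ {r}) = Q \ K := by
        rw [Set.diff_diff]
        congr 1
        exact Set.union_diff_cancel (by simpa using hrK)
      rw [h1, h2, h3]


end Sem

lemma sum_insert_le {γ : Type} [DecidableEq γ] {a : γ} {s : Finset γ} (g : γ → ℕ) :
    ∑ x ∈ insert a s, g x ≤ g a + ∑ x ∈ s, g x := by
  by_cases ha : a ∈ s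
  · rw [Finset.insert_eq_self.mpr ha]; omega
  · rw [Finset.sum_insert ha]

lemma sum_image_le' {β γ : Type} [DecidableEq γ] (s : Finset β) (f : β → γ) (g : γ → ℕ) :
    ∑ x ∈ s.image f, g x ≤ ∑ x ∈ s, g (f x) := by
  classical
  induction s using Finset.induction_on with
  | empty => simp
  | @insert a s ha ih =>
    rw [Finset.image_insert, Finset.sum_insert ha]
    calc ∑ x ∈ insert (f a) (s.image f), g x ≤ g (f a) + ∑ x ∈ s.image f, g x :=
          sum_insert_le g
      _ ≤ g (f a) + ∑ x ∈ s, g (f x) := by omega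

/-- The positive-reduction normal form of a rule w.r.t. a set of head atoms. -/
noncomputable def filt (H : Set Atom) (r : Rule Atom) : Rule Atom :=
  ⟨r.head, r.bodyPos, r.bodyNeg.filter (fun c => c ∈ H)⟩

noncomputable def negOut (H : Set Atom) (Q : Program Atom) : ℕ :=
  ∑ r ∈ (Set.toFinite Q).toFinset, (r.bodyNeg.filter (fun c => c ∉ H)).card

lemma filt_image_id {H : Set Atom} {Q : Program Atom}
    (h : ∀ r ∈ Q, ∀ c ∈ r.bodyNeg, c ∈ H) : filt H '' Q = Q := by
  have h1 : ∀ r ∈ Q, filt H r = r := by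
    intro r hr
    refine Rule.ext' rfl rfl ?_
    simpa [filt] using Finset.filter_true_of_mem (h r hr)
  calc filt H '' Q = id '' Q := Set.image_congr (by simpa using h1)
    _ = Q := Set.image_id Q

lemma negOut_pos {H : Set Atom} {Q : Program Atom} {r : Rule Atom} {c : Atom}
    (hr : r ∈ Q) (hc : c ∈ r.bodyNeg) (hcH : c ∉ H) : 0 < negOut H Q := by
  refine Finset.sum_pos' (fun i _ => Nat.zero_le _) ?_
  exact ⟨r, (Set.Finite.mem_toFinset _).mpr hr,
    Finset.card_pos.mpr ⟨c, Finset.mem_filter.mpr ⟨hc, hcH⟩⟩⟩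

lemma heads_mono {Q Q' : Program Atom} (h : Q' ⊆ Q) : heads Q' ⊆ heads Q := by
  rintro a ⟨r, hr, ha⟩; exact ⟨r, h hr, ha⟩

section Sem2

variable (S : BDSemantics Atom) (hS : AllowsStar S)
include hS

/-- Batch positive reduction. -/
lemma sem_filt : ∀ (k : ℕ) (Q : Program Atom) (H : Set Atom), IsProgram Q → heads Q ⊆ H →
    negOut H Q ≤ k → S.sem Q = S.sem (filt H '' Q) := by
  intro k
  induction k with
  | zero =>
    intro Q H hQ hH hk
    have hdone : ∀ r ∈ Q, ∀ c ∈ r.bodyNeg, c ∈ H := by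
      by_contra hc
      push_neg at hc
      obtain ⟨r, hr, c, hc1, hc2⟩ := hc
      have := negOut_pos hr hc1 hc2
      omega
    rw [filt_image_id hdone]
  | succ k ih =>
    intro Q H hQ hH hk
    by_cases hex : ∃ r ∈ Q, ∃ c ∈ r.bodyNeg, c ∉ H
    · obtain ⟨r, hr, c, hc, hcH⟩ := hex
      set e : Rule Atom := ⟨r.head, r.bodyPos, r.bodyNeg.erase c⟩ with he
      set Q' : Program Atom := (Q \ {r}) ∪ {e} with hQ'def
      have hchQ : c ∉ heads Q := fun hmem => hcH (hH hmem)
      have h1 : S.sem Q = S.sem Q' := sem_posred S hS hQ hr hc hchQ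
      have hQ'prog : IsProgram Q' := by
        refine isProgram_union (hQ.mono Set.diff_subset) ?_
        rintro r' hr'
        rcases hr' with rfl
        exact hQ r hr
      have hH' : heads Q' ⊆ H := by
        rintro a ⟨s, hs, ha⟩
        rcases hs with ⟨hsQ, -⟩ | rfl
        · exact hH ⟨s, hsQ, ha⟩
        · exact hH ⟨r, hr, ha⟩
      have hcmem : c ∈ r.bodyNeg.filter (fun c' => c' ∉ H) :=
        Finset.mem_filter.mpr ⟨hc, hcH⟩
      have tc : (e.bodyNeg.filter (fun c' => c' ∉ H)).card + 1
          = (r.bodyNeg.filter (fun c' => c' ∉ H)).card := by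
        have h1' : e.bodyNeg.filter (fun c' => c' ∉ H)
            = (r.bodyNeg.filter (fun c' => c' ∉ H)).erase c := by
          show (r.bodyNeg.erase c).filter (fun c' => c' ∉ H) = _
          exact Finset.filter_erase (p := fun c' => c' ∉ H) c r.bodyNeg
        have hpos := Finset.card_pos.mpr ⟨c, hcmem⟩
        rw [h1', Finset.card_erase_of_mem hcmem]
        omega
      have hneg : negOut H Q' ≤ k := by
        set F := (Set.toFinite Q).toFinset with hF
        have hrF : r ∈ F := (Set.Finite.mem_toFinset _).mpr hr
        have hsub : (Set.toFinite Q').toFinset ⊆ insert e (F.erase r) := by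
          intro x hx
          rw [Set.Finite.mem_toFinset] at hx
          rcases hx with ⟨hxQ, hxr⟩ | rfl
          · refine Finset.mem_insert.mpr (Or.inr (Finset.mem_erase.mpr ⟨?_, ?_⟩))
            · simpa using hxr
            · exact (Set.Finite.mem_toFinset _).mpr hxQ
          · exact Finset.mem_insert_self _ _
        have h2 : negOut H Q' ≤ ∑ x ∈ insert e (F.erase r),
            (x.bodyNeg.filter (fun c' => c' ∉ H)).card :=
          Finset.sum_le_sum_of_subset hsub
        have h3 : ∑ x ∈ insert e (F.erase r), (x.bodyNeg.filter (fun c' => c' ∉ H)).card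
            ≤ (e.bodyNeg.filter (fun c' => c' ∉ H)).card
              + ∑ x ∈ F.erase r, (x.bodyNeg.filter (fun c' => c' ∉ H)).card :=
          sum_insert_le _
        have h4 : (r.bodyNeg.filter (fun c' => c' ∉ H)).card
            + ∑ x ∈ F.erase r, (x.bodyNeg.filter (fun c' => c' ∉ H)).card
            = ∑ x ∈ F, (x.bodyNeg.filter (fun c' => c' ∉ H)).card :=
          Finset.add_sum_erase F (fun x => (x.bodyNeg.filter (fun c' => c' ∉ H)).card) hrF
        have h5 : negOut H Q = ∑ x ∈ F, (x.bodyNeg.filter (fun c' => c' ∉ H)).card := rfl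
        omega
      have hfe : filt H e = filt H r := by
        refine Rule.ext' rfl rfl ?_
        show (r.bodyNeg.erase c).filter (fun c' => c' ∈ H) = r.bodyNeg.filter (fun c' => c' ∈ H)
        rw [Finset.filter_erase]
        exact Finset.erase_eq_of_notMem (by simp [hcH])
      have himeq : filt H '' Q' = filt H '' Q := by
        apply Set.Subset.antisymm
        · rintro x ⟨s, hs, rfl⟩
          rcases hs with ⟨hsQ, -⟩ | rfl
          · exact ⟨s, hsQ, rfl⟩
          · exact ⟨r, hr, hfe.symm⟩
        · rintro x ⟨s, hs, rfl⟩
          by_cases hsr : s = r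
          · subst hsr
            exact ⟨e, Or.inr rfl, hfe⟩
          · exact ⟨s, Or.inl ⟨hs, by simpa using hsr⟩, rfl⟩
      rw [h1, ih Q' H hQ'prog hH' hneg, himeq]
    · push_neg at hex
      rw [filt_image_id hex]

end Sem2

lemma Rstar_eq (N : Program Atom) :
    Rstar N = filt (heads N) '' {r | r ∈ N ∧ ¬ ∃ w ∈ N, SImplication r w} := by
  ext r'
  constructor
  · rintro ⟨r, hr, hns, rfl⟩
    exact ⟨r, ⟨hr, hns⟩, rfl⟩
  · rintro ⟨r, ⟨hr, hns⟩, rfl⟩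
    exact ⟨r, hr, hns, rfl⟩

lemma isProgram_Rstar {N : Program Atom} (hN : IsProgram N) : IsProgram (Rstar N) := by
  rintro r' ⟨r, hr, -, rfl⟩
  exact hN r hr

noncomputable def wt (Q : Program Atom) : ℕ := ∑ r ∈ (Set.toFinite Q).toFinset, (1 + r.bodyNeg.card)

lemma wt_Rstar (N : Program Atom) : Rstar N = N ∨ wt (Rstar N) < wt N := by
  classical
  set M : Program Atom := {r | r ∈ N ∧ ¬ ∃ w ∈ N, SImplication r w} with hM
  have hR : Rstar N = filt (heads N) '' M := Rstar_eq N
  have hMN : M ⊆ N := fun r hr => hr.1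
  have hfinEq : (Set.toFinite (filt (heads N) '' M)).toFinset
      = (Set.toFinite M).toFinset.image (filt (heads N)) := by
    ext x; simp
  have hb : wt (Rstar N) ≤ ∑ r ∈ (Set.toFinite M).toFinset,
      (1 + (filt (heads N) r).bodyNeg.card) := by
    rw [hR]
    unfold wt
    rw [hfinEq]
    exact sum_image_le' _ _ _
  have hb2 : ∀ r : Rule Atom, (filt (heads N) r).bodyNeg.card ≤ r.bodyNeg.card :=
    fun r => Finset.card_le_card (Finset.filter_subset _ _)
  by_cases hMall : ∀ r ∈ N, ¬ ∃ w ∈ N, SImplication r w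
  · have hMeq : M = N := Set.Subset.antisymm hMN (fun r hr => ⟨hr, hMall r hr⟩)
    by_cases hid : ∀ r ∈ N, filt (heads N) r = r
    · left
      rw [hR, hMeq]
      calc filt (heads N) '' N = id '' N := Set.image_congr (by simpa using hid)
        _ = N := Set.image_id N
    · right
      push_neg at hid
      obtain ⟨r, hrN, hne⟩ := hid
      have hlt : (filt (heads N) r).bodyNeg.card < r.bodyNeg.card := by
        refine Finset.card_lt_card (Finset.ssubset_iff_subset_ne.mpr
          ⟨Finset.filter_subset _ _, fun h => hne (Rule.ext' rfl rfl h)⟩)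
      have hMF : (Set.toFinite M).toFinset = (Set.toFinite N).toFinset := by
        ext x; simp [hMeq]
      have hstrict : ∑ r ∈ (Set.toFinite M).toFinset,
          (1 + (filt (heads N) r).bodyNeg.card) < wt N := by
        unfold wt
        rw [hMF]
        refine Finset.sum_lt_sum (fun i _ => by have := hb2 i; omega)
          ⟨r, (Set.Finite.mem_toFinset _).mpr hrN, by omega⟩
      omega
  · right
    push_neg at hMall
    obtain ⟨r, hrN, hw⟩ := hMall
    have hrM : r ∉ M := fun hc => hc.2 hw
    have hfsub : (Set.toFinite M).toFinset ⊆ (Set.toFinite N).toFinset := by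
      intro x hx
      rw [Set.Finite.mem_toFinset] at hx ⊢
      exact hMN hx
    have h5 : ∑ r ∈ (Set.toFinite M).toFinset, (1 + (filt (heads N) r).bodyNeg.card)
        ≤ ∑ r ∈ (Set.toFinite M).toFinset, (1 + r.bodyNeg.card) :=
      Finset.sum_le_sum (fun i _ => by have := hb2 i; omega)
    have h6 : ∑ r ∈ (Set.toFinite M).toFinset, (1 + r.bodyNeg.card) < wt N := by
      refine Finset.sum_lt_sum_of_subset hfsub
        ((Set.Finite.mem_toFinset _).mpr hrN) ?_ (by omega) (fun j _ _ => Nat.zero_le _)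
      rw [Set.Finite.mem_toFinset]
      exact hrM
    omega

lemma exists_rstar_fix (N : Program Atom) :
    ∃ k, Rstar ((Rstar (Atom := Atom))^[k] N) = (Rstar (Atom := Atom))^[k] N := by
  suffices h : ∀ n (N : Program Atom), wt N ≤ n →
      ∃ k, Rstar ((Rstar (Atom := Atom))^[k] N) = (Rstar (Atom := Atom))^[k] N from
    h (wt N) N le_rfl
  intro n
  induction n with
  | zero =>
    intro N hN
    rcases wt_Rstar N with he | hlt
    · exact ⟨0, by simpa using he⟩
    · omega
  | succ n ih =>
    intro N hN
    rcases wt_Rstar N with he | hlt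
    · exact ⟨0, by simpa using he⟩
    · obtain ⟨k, hk⟩ := ih (Rstar N) (by omega)
      exact ⟨k + 1, by rw [Function.iterate_succ_apply]; exact hk⟩

section Sem3

variable (S : BDSemantics Atom) (hS : AllowsStar S)
include hS

lemma sem_Rstar {N : Program Atom} (hN : IsProgram N) : S.sem N = S.sem (Rstar N) := by
  classical
  set K : Program Atom := {r | r ∈ N ∧ ∃ w ∈ N, SImplication r w} with hK
  have h1 : S.sem N = S.sem (N \ K) :=
    sem_delK S hS _ N K hN (fun r hr => hr.1) (fun s hs => hs.2) le_rfl
  have hNK : N \ K = {r | r ∈ N ∧ ¬ ∃ w ∈ N, SImplication r w} := by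
    ext r
    simp only [Set.mem_diff, Set.mem_setOf_eq, hK]
    constructor
    · rintro ⟨h1, h2⟩
      exact ⟨h1, fun hex => h2 ⟨h1, hex⟩⟩
    · rintro ⟨h1, h2⟩
      exact ⟨h1, fun hcon => h2 hcon.2⟩
  have h2 : S.sem (N \ K) = S.sem (filt (heads N) '' (N \ K)) :=
    sem_filt S hS _ _ (heads N) (hN.mono Set.diff_subset)
      ((heads_mono Set.diff_subset).trans (le_refl _)) le_rfl
  rw [h1, h2, hNK, ← Rstar_eq]

lemma sem_lft_resStar {P : Program Atom} (hL : IsProgram (Lft P)) :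
    S.sem (Lft P) = S.sem (resStar P) := by
  have hfix := exists_rstar_fix (Lft P)
  have hiter : ∀ j, IsProgram ((Rstar (Atom := Atom))^[j] (Lft P)) ∧
      S.sem (Lft P) = S.sem ((Rstar (Atom := Atom))^[j] (Lft P)) := by
    intro j
    induction j with
    | zero => exact ⟨hL, rfl⟩
    | succ j ih =>
      obtain ⟨hp, hs⟩ := ih
      rw [Function.iterate_succ_apply']
      exact ⟨isProgram_Rstar hp, hs.trans (sem_Rstar S hS hp)⟩
  rw [resStar, dif_pos hfix]
  exact (hiter _).2

end Sem3


/-! ### `Lft` basics -/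

lemma TG_mono (P : Program Atom) {J J' : Set (Rule Atom)} (h : J ⊆ J') :
    TG P J ⊆ TG P J' := by
  rintro C ⟨r, hr, hf, bf, hprem, rfl⟩
  exact ⟨r, hr, hf, bf, fun b hb => h (hprem b hb), rfl⟩

lemma TG_iter_succ (P : Program Atom) (k : ℕ) : (TG P)^[k] ∅ ⊆ (TG P)^[k + 1] ∅ := by
  induction k with
  | zero =>
    rw [Function.iterate_zero_apply]
    exact Set.empty_subset _
  | succ k ih =>
    rw [Function.iterate_succ_apply', Function.iterate_succ_apply']
    exact TG_mono P ih

lemma TG_iter_le (P : Program Atom) {k l : ℕ} (h : k ≤ l) :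
    (TG P)^[k] ∅ ⊆ (TG P)^[l] ∅ := by
  induction h with
  | refl => exact subset_rfl
  | step _ ih => exact ih.trans (TG_iter_succ P _)

lemma exists_lft_stab (P : Program Atom) :
    ∃ K, Lft P = (TG P)^[K] ∅ ∧ TG P (Lft P) = Lft P := by
  classical
  have : Fintype (Rule Atom) := Fintype.ofFinite _
  have hstab : ∃ K, (TG P)^[K + 1] ∅ = (TG P)^[K] ∅ := by
    by_contra hc
    push_neg at hc
    have hlt : ∀ k : ℕ, ((Set.toFinite ((TG P)^[k] ∅)).toFinset).card
        < ((Set.toFinite ((TG P)^[k + 1] ∅)).toFinset).card := by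
      intro k
      apply Finset.card_lt_card
      rw [Finset.ssubset_iff_subset_ne]
      constructor
      · intro x hx
        rw [Set.Finite.mem_toFinset] at hx ⊢
        exact TG_iter_succ P k hx
      · intro he
        apply hc k
        apply Set.Subset.antisymm
        · intro x hx
          have hx' : x ∈ (Set.toFinite ((TG P)^[k + 1] ∅)).toFinset :=
            (Set.Finite.mem_toFinset _).mpr hx
          rw [← he] at hx'
          exact (Set.Finite.mem_toFinset _).mp hx'
        · exact TG_iter_succ P k
    have hmono : ∀ k : ℕ, k ≤ ((Set.toFinite ((TG P)^[k] ∅)).toFinset).card := by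
      intro k
      induction k with
      | zero => exact Nat.zero_le _
      | succ k ih =>
        have := hlt k
        omega
    have h1 := hmono (Fintype.card (Rule Atom) + 1)
    have h2 := Finset.card_le_univ ((Set.toFinite ((TG P)^[Fintype.card (Rule Atom) + 1] ∅)).toFinset)
    have h3 : (Finset.univ : Finset (Rule Atom)).card = Fintype.card (Rule Atom) :=
      Finset.card_univ
    omega
  obtain ⟨K, hK⟩ := hstab
  have hconst : ∀ j, (TG P)^[K + j] ∅ = (TG P)^[K] ∅ := by
    intro j
    induction j with
    | zero => rfl
    | succ j ih =>
      have he : K + (j + 1) = (K + j) + 1 := by omega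
      rw [he, Function.iterate_succ_apply', ih]
      exact ((Function.iterate_succ_apply' (TG P) K ∅).symm).trans hK
  have hLft : Lft P = (TG P)^[K] ∅ := by
    apply Set.Subset.antisymm
    · intro x hx
      obtain ⟨j, hxs⟩ := Set.mem_iUnion.mp hx
      rcases le_or_gt j K with hj | hj
      · exact TG_iter_le P hj hxs
      · have : (TG P)^[j] ∅ = (TG P)^[K] ∅ := by
          have : j = K + (j - K) := by omega
          rw [this]
          exact hconst _
        rw [← this]
        exact hxs
    · intro x hx
      exact Set.mem_iUnion.mpr ⟨K, hx⟩
  refine ⟨K, hLft, ?_⟩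
  rw [hLft]
  exact ((Function.iterate_succ_apply' (TG P) K ∅).symm).trans hK

lemma mem_lft_of_iter {P : Program Atom} {C : Rule Atom} {k : ℕ}
    (h : C ∈ (TG P)^[k] ∅) : C ∈ Lft P := Set.mem_iUnion.mpr ⟨k, h⟩

lemma lft_bodyPos {P : Program Atom} {C : Rule Atom} (hC : C ∈ Lft P) : C.bodyPos = ∅ := by
  obtain ⟨k, hxs⟩ := Set.mem_iUnion.mp hC
  cases k with
  | zero => simp at hxs
  | succ k =>
    rw [Function.iterate_succ_apply'] at hxs
    obtain ⟨r, hr, hf, bf, hprem, rfl⟩ := hxs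
    rfl

lemma lft_head_nonempty {P : Program Atom} (hP : IsProgram P) {C : Rule Atom}
    (hC : C ∈ Lft P) : C.head.Nonempty := by
  obtain ⟨k, hxs⟩ := Set.mem_iUnion.mp hC
  cases k with
  | zero => simp at hxs
  | succ k =>
    rw [Function.iterate_succ_apply'] at hxs
    obtain ⟨r, hr, hf, bf, hprem, rfl⟩ := hxs
    obtain ⟨a, ha⟩ := hP r hr
    exact ⟨a, Finset.mem_union_left _ ha⟩

lemma isProgram_lft {P : Program Atom} (hP : IsProgram P) : IsProgram (Lft P) :=
  fun _ hC => lft_head_nonempty hP hC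

lemma isProgram_lft_union {P : Program Atom} (hP : IsProgram P) {X : Set (Rule Atom)}
    (hX : X ⊆ Lft P) : IsProgram (P ∪ X) :=
  isProgram_union hP ((isProgram_lft hP).mono hX)

/-- The conditional fact produced by `T_P^G` from rule `r`. -/
def tgC (r : Rule Atom) (hf bf : Atom → Finset Atom) : Rule Atom :=
  ⟨r.head ∪ r.bodyPos.biUnion hf, ∅, r.bodyNeg ∪ r.bodyPos.biUnion bf⟩

lemma tgC_of_empty {r : Rule Atom} (hbp : r.bodyPos = ∅) (hf bf : Atom → Finset Atom) :
    tgC r hf bf = r :=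
  Rule.ext' (by simp [tgC, hbp]) (by simp [tgC, hbp]) (by simp [tgC, hbp])

lemma cf_mem_lft {P : Program Atom} {r : Rule Atom} (hr : r ∈ P) (hcf : r.bodyPos = ∅) :
    r ∈ Lft P := by
  refine mem_lft_of_iter (k := 1) ?_
  rw [Function.iterate_one]
  exact ⟨r, hr, fun _ => ∅, fun _ => ∅, by simp [hcf], (tgC_of_empty hcf _ _).symm⟩

section Sem4

variable (S : BDSemantics Atom) (hS : AllowsStar S)
include hS

/-- Adding a `T_P^G`-derivable conditional fact to a program preserves any
semantics allowing `T*_WFS`. -/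
lemma sem_addTG : ∀ (m : ℕ) (Q : Program Atom) (r : Rule Atom) (hf bf : Atom → Finset Atom),
    IsProgram Q → r ∈ Q → r.bodyPos.card ≤ m →
    (∀ b ∈ r.bodyPos, (⟨insert b (hf b), ∅, bf b⟩ : Rule Atom) ∈ Q) →
    S.sem (Q ∪ {tgC r hf bf}) = S.sem Q := by
  intro m
  induction m with
  | zero =>
    intro Q r hf bf hQ hr hm hprem
    have hbp : r.bodyPos = ∅ := Finset.card_eq_zero.mp (Nat.le_zero.mp hm)
    rw [tgC_of_empty hbp, Set.union_eq_self_of_subset_right (by simpa using hr)]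
  | succ m ih =>
    intro Q r hf bf hQ hr hm hprem
    by_cases hC : tgC r hf bf ∈ Q
    · rw [Set.union_eq_self_of_subset_right (by simpa using hC)]
    rcases Finset.eq_empty_or_nonempty r.bodyPos with hbp | ⟨b, hb⟩
    · rw [tgC_of_empty hbp, Set.union_eq_self_of_subset_right (by simpa using hr)]
    have hprogC : IsProgram (Q ∪ {tgC r hf bf}) := by
      refine isProgram_union hQ ?_
      rintro x hx
      rcases hx with rfl
      obtain ⟨a, ha⟩ := hQ r hr
      exact ⟨a, Finset.mem_union_left _ ha⟩
    by_cases hhit : ∃ b' ∈ r.bodyPos, b' ∈ (tgC r hf bf).head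
    · obtain ⟨b', hb', hb'h⟩ := hhit
      have hCb : (⟨insert b' (hf b'), ∅, bf b'⟩ : Rule Atom) ∈ Q := hprem b' hb'
      have hne : tgC r hf bf ≠ (⟨insert b' (hf b'), ∅, bf b'⟩ : Rule Atom) :=
        fun he => hC (he ▸ hCb)
      have hsub1 : (insert b' (hf b')) ⊆ (tgC r hf bf).head := by
        intro x hx
        rcases Finset.mem_insert.mp hx with rfl | hx
        · exact hb'h
        · exact Finset.mem_union_right _ (Finset.mem_biUnion.mpr ⟨b', hb', hx⟩)
      have hsub3 : bf b' ⊆ (tgC r hf bf).bodyNeg := by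
        intro x hx
        exact Finset.mem_union_right _ (Finset.mem_biUnion.mpr ⟨b', hb', hx⟩)
      have hproper : (insert b' (hf b') ⊂ (tgC r hf bf).head) ∨
          ((∅ : Finset Atom) ⊂ (tgC r hf bf).bodyPos) ∨
          (bf b' ⊂ (tgC r hf bf).bodyNeg) := by
        by_cases hhd : insert b' (hf b') = (tgC r hf bf).head
        · refine Or.inr (Or.inr (Finset.ssubset_iff_subset_ne.mpr ⟨hsub3, fun he => hne ?_⟩))
          exact Rule.ext' hhd.symm rfl he.symm
        · exact Or.inl (Finset.ssubset_iff_subset_ne.mpr ⟨hsub1, hhd⟩)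
      have hsimp : SImplication (tgC r hf bf) (⟨insert b' (hf b'), ∅, bf b'⟩ : Rule Atom) :=
        ⟨hne, Or.inl ⟨hsub1, by simp, hsub3, hproper⟩⟩
      have hstep : ElimSImpl (Q ∪ {tgC r hf bf}) Q := by
        refine ⟨tgC r hf bf, Or.inr rfl,
          ⟨(⟨insert b' (hf b'), ∅, bf b'⟩ : Rule Atom), Or.inl hCb, hsimp⟩, ?_⟩
        ext x
        simp only [Set.mem_diff, Set.mem_union, Set.mem_singleton_iff]
        constructor
        · intro hx
          exact ⟨Or.inl hx, fun he => hC (he ▸ hx)⟩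
        · rintro ⟨hx | rfl, hxC⟩
          · exact hx
          · exact absurd rfl hxC
      exact hS.2.2.1 _ _ hprogC hQ hstep
    · push_neg at hhit
      have hbC : b ∉ (tgC r hf bf).head := hhit b hb
      have hbhf : b ∉ hf b := fun hmem =>
        hbC (Finset.mem_union_right _ (Finset.mem_biUnion.mpr ⟨b, hb, hmem⟩))
      set Cb : Rule Atom := ⟨insert b (hf b), ∅, bf b⟩ with hCbdef
      have hCbQ : Cb ∈ Q := hprem b hb
      set ρ : Rule Atom := ⟨r.head ∪ Cb.head.erase b, r.bodyPos.erase b ∪ Cb.bodyPos,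
        r.bodyNeg ∪ Cb.bodyNeg⟩ with hρdef
      have hρmem : ρ ∈ resSet Q r b := ⟨Cb, hCbQ, Finset.mem_insert_self _ _, rfl⟩
      set Q2 : Program Atom := (Q \ {r}) ∪ resSet Q r b with hQ2def
      have hrC : r ≠ tgC r hf bf := by
        intro he
        have hbe : r.bodyPos = (∅ : Finset Atom) := congrArg Rule.bodyPos he
        rw [hbe] at hb
        simp at hb
      have h1 : S.sem Q = S.sem Q2 := sem_unfold S hS hQ hr hb
      have h2 : S.sem (Q ∪ {tgC r hf bf}) =
          S.sem (((Q ∪ {tgC r hf bf}) \ {r}) ∪ resSet (Q ∪ {tgC r hf bf}) r b) :=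
        sem_unfold S hS hprogC (Or.inl hr) hb
      have hAR : resSet (Q ∪ {tgC r hf bf}) r b = resSet Q r b := by
        apply Set.Subset.antisymm
        · rintro x ⟨r', hr', hbh, rfl⟩
          rcases hr' with hr' | rfl
          · exact ⟨r', hr', hbh, rfl⟩
          · exact absurd hbh hbC
        · rintro x ⟨r', hr', hbh, rfl⟩
          exact ⟨r', Or.inl hr', hbh, rfl⟩
      have hset : ((Q ∪ {tgC r hf bf}) \ {r}) ∪ resSet (Q ∪ {tgC r hf bf}) r b
          = Q2 ∪ {tgC r hf bf} := by
        rw [hAR, hQ2def]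
        ext x
        simp only [Set.mem_union, Set.mem_diff, Set.mem_singleton_iff]
        constructor
        · rintro (⟨hx | rfl, hxr⟩ | hx)
          exacts [Or.inl (Or.inl ⟨hx, hxr⟩), Or.inr rfl, Or.inl (Or.inr hx)]
        · rintro ((⟨hx, hxr⟩ | hx) | rfl)
          exacts [Or.inl ⟨Or.inl hx, hxr⟩, Or.inr hx,
            Or.inl ⟨Or.inr rfl, fun he => hrC he.symm⟩]
      have hQ2prog : IsProgram Q2 :=
        isProgram_union (hQ.mono Set.diff_subset) (isProgram_resSet hQ hr)
      have hbpρ : ρ.bodyPos = r.bodyPos.erase b := by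
        rw [hρdef]
        show r.bodyPos.erase b ∪ Cb.bodyPos = _
        rw [hCbdef]
        exact Finset.union_empty _
      have he1 : Cb.head.erase b = hf b := by
        rw [hCbdef]
        exact Finset.erase_insert hbhf
      have hCeq : tgC ρ hf bf = tgC r hf bf := by
        have e3 : r.bodyPos.biUnion hf = hf b ∪ (r.bodyPos.erase b).biUnion hf := by
          conv_lhs => rw [← Finset.insert_erase hb]
          rw [Finset.biUnion_insert]
        have e4 : r.bodyPos.biUnion bf = bf b ∪ (r.bodyPos.erase b).biUnion bf := by
          conv_lhs => rw [← Finset.insert_erase hb]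
          rw [Finset.biUnion_insert]
        refine Rule.ext' ?_ rfl ?_
        · show ρ.head ∪ ρ.bodyPos.biUnion hf = r.head ∪ r.bodyPos.biUnion hf
          rw [hbpρ, hρdef]
          show (r.head ∪ Cb.head.erase b) ∪ _ = _
          rw [he1, e3, Finset.union_assoc]
        · show ρ.bodyNeg ∪ ρ.bodyPos.biUnion bf = r.bodyNeg ∪ r.bodyPos.biUnion bf
          rw [hbpρ, hρdef]
          show (r.bodyNeg ∪ Cb.bodyNeg) ∪ _ = _
          rw [hCbdef, e4]
          show (r.bodyNeg ∪ bf b) ∪ _ = _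
          rw [Finset.union_assoc]
      have hpremρ : ∀ b' ∈ ρ.bodyPos, (⟨insert b' (hf b'), ∅, bf b'⟩ : Rule Atom) ∈ Q2 := by
        intro b' hb'
        rw [hbpρ] at hb'
        have hb'3 : b' ∈ r.bodyPos := Finset.mem_of_mem_erase hb'
        refine Or.inl ⟨hprem b' hb'3, ?_⟩
        intro he
        rw [Set.mem_singleton_iff] at he
        have hbe : (∅ : Finset Atom) = r.bodyPos := congrArg Rule.bodyPos he
        rw [← hbe] at hb
        simp at hb
      have hcard : ρ.bodyPos.card ≤ m := by
        rw [hbpρ, Finset.card_erase_of_mem hb]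
        omega
      have h3 : S.sem (Q2 ∪ {tgC ρ hf bf}) = S.sem Q2 :=
        ih Q2 ρ hf bf hQ2prog (Or.inr hρmem) hcard hpremρ
      rw [hCeq] at h3
      calc S.sem (Q ∪ {tgC r hf bf}) = S.sem (Q2 ∪ {tgC r hf bf}) := by rw [h2, hset]
        _ = S.sem Q2 := h3
        _ = S.sem Q := h1.symm

lemma sem_add_lft {P : Program Atom} (hP : IsProgram P) :
    S.sem (P ∪ Lft P) = S.sem P := by
  obtain ⟨K, hK, -⟩ := exists_lft_stab P
  have hlayer : ∀ k, S.sem (P ∪ (TG P)^[k] ∅) = S.sem P := by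
    intro k
    induction k with
    | zero =>
      rw [Function.iterate_zero_apply, Set.union_empty]
    | succ k ih =>
      have key : ∀ (F : Set (Rule Atom)), F.Finite → F ⊆ (TG P)^[k + 1] ∅ →
          S.sem (P ∪ (TG P)^[k] ∅ ∪ F) = S.sem (P ∪ (TG P)^[k] ∅) := by
        intro F hFfin
        refine Set.Finite.induction_on
          (motive := fun F _ => F ⊆ (TG P)^[k + 1] ∅ →
            S.sem (P ∪ (TG P)^[k] ∅ ∪ F) = S.sem (P ∪ (TG P)^[k] ∅))
          F hFfin (fun _ => by rw [Set.union_empty]) ?_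
        intro a F' haF hF'fin ihF hF
        have haT : a ∈ TG P ((TG P)^[k] ∅) := by
          have h := hF (Set.mem_insert a F')
          rwa [Function.iterate_succ_apply'] at h
        obtain ⟨r, hrP, hf, bf, hprem, haeq⟩ := haT
        have haeq' : a = tgC r hf bf := haeq
        subst haeq'
        have hsplit : P ∪ (TG P)^[k] ∅ ∪ insert (tgC r hf bf) F'
            = (P ∪ (TG P)^[k] ∅ ∪ F') ∪ {tgC r hf bf} := by
          ext x
          simp only [Set.mem_union, Set.mem_insert_iff, Set.mem_singleton_iff]
          tauto
        have hXsub : (TG P)^[k] ∅ ∪ F' ⊆ Lft P := by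
          rintro x (hx | hx)
          · exact mem_lft_of_iter hx
          · exact mem_lft_of_iter (hF (Set.mem_insert_of_mem _ hx))
        have hprog : IsProgram (P ∪ (TG P)^[k] ∅ ∪ F') := by
          rw [Set.union_assoc]
          exact isProgram_lft_union hP hXsub
        rw [hsplit]
        rw [sem_addTG S hS r.bodyPos.card (P ∪ (TG P)^[k] ∅ ∪ F') r hf bf hprog
          (Or.inl (Or.inl hrP)) le_rfl
          (fun b hb => Or.inl (Or.inr (hprem b hb)))]
        exact ihF (fun x hx => hF (Set.mem_insert_of_mem _ hx))
      have habs : P ∪ (TG P)^[k + 1] ∅ = P ∪ (TG P)^[k] ∅ ∪ (TG P)^[k + 1] ∅ := by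
        rw [Set.union_assoc, Set.union_eq_self_of_subset_left (TG_iter_succ P k)]
      rw [habs, key _ (Set.toFinite _) subset_rfl, ih]
  rw [hK]
  exact hlayer K

end Sem4


/-! ### Soundness of rules w.r.t. `Lft` and the atom-elimination procedure -/

lemma biUnion_union_distrib {s t : Finset Atom} (f : Atom → Finset Atom) :
    (s ∪ t).biUnion f = s.biUnion f ∪ t.biUnion f := by
  ext x
  simp only [Finset.mem_biUnion, Finset.mem_union]
  constructor
  · rintro ⟨c, hc | hc, hx⟩
    exacts [Or.inl ⟨c, hc, hx⟩, Or.inr ⟨c, hc, hx⟩]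
  · rintro (⟨c, hc, hx⟩ | ⟨c, hc, hx⟩)
    exacts [⟨c, Or.inl hc, hx⟩, ⟨c, Or.inr hc, hx⟩]

/-- A rule is sound w.r.t. `P` if all its total resolutions against `Lft P`
belong to `Lft P`. -/
def Snd (P : Program Atom) (r : Rule Atom) : Prop :=
  ∀ hf bf : Atom → Finset Atom,
    (∀ b ∈ r.bodyPos, (⟨insert b (hf b), ∅, bf b⟩ : Rule Atom) ∈ Lft P) →
    tgC r hf bf ∈ Lft P

lemma snd_of_mem {P : Program Atom} {r : Rule Atom} (hr : r ∈ P) : Snd P r := by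
  intro hf bf hprem
  obtain ⟨K, hK, hfix⟩ := exists_lft_stab P
  rw [← hfix]
  exact ⟨r, hr, hf, bf, hprem, rfl⟩

lemma snd_of_lft {P : Program Atom} {C : Rule Atom} (hC : C ∈ Lft P) : Snd P C := by
  intro hf bf hprem
  rwa [tgC_of_empty (lft_bodyPos hC)]

/-- Soundness is closed under single resolution steps. -/
lemma snd_res {P : Program Atom} {r r' : Rule Atom} {b : Atom}
    (hr : Snd P r) (hr' : Snd P r') (hb : b ∈ r.bodyPos) (hbh : b ∈ r'.head)
    (hbn : b ∉ r'.bodyPos) :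
    Snd P (⟨r.head ∪ r'.head.erase b, r.bodyPos.erase b ∪ r'.bodyPos,
      r.bodyNeg ∪ r'.bodyNeg⟩ : Rule Atom) := by
  intro hf bf hprem
  set ρ : Rule Atom := ⟨r.head ∪ r'.head.erase b, r.bodyPos.erase b ∪ r'.bodyPos,
    r.bodyNeg ∪ r'.bodyNeg⟩ with hρ
  have hprem' : ∀ c ∈ r'.bodyPos, (⟨insert c (hf c), ∅, bf c⟩ : Rule Atom) ∈ Lft P :=
    fun c hc => hprem c (Finset.mem_union_right _ hc)
  have hC' : tgC r' hf bf ∈ Lft P := hr' hf bf hprem'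
  have hbC' : b ∈ (tgC r' hf bf).head := Finset.mem_union_left _ hbh
  classical
  set hf₂ : Atom → Finset Atom := fun c => if c = b then
      (if b ∈ (tgC ρ hf bf).head then (tgC r' hf bf).head else (tgC r' hf bf).head.erase b)
    else hf c with hhf₂
  set bf₂ : Atom → Finset Atom := fun c => if c = b then (tgC r' hf bf).bodyNeg else bf c
    with hbf₂
  have hfb : hf₂ b = (if b ∈ (tgC ρ hf bf).head then (tgC r' hf bf).head
      else (tgC r' hf bf).head.erase b) := by
    simp only [hhf₂, if_pos]
  have hbfb : bf₂ b = (tgC r' hf bf).bodyNeg := by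
    simp only [hbf₂, if_pos]
  have hfne : ∀ c, c ≠ b → hf₂ c = hf c := by
    intro c hc
    simp only [hhf₂, if_neg hc]
  have hbfne : ∀ c, c ≠ b → bf₂ c = bf c := by
    intro c hc
    simp only [hbf₂, if_neg hc]
  have hins : insert b (hf₂ b) = (tgC r' hf bf).head := by
    rw [hfb]
    by_cases hcase : b ∈ (tgC ρ hf bf).head
    · rw [if_pos hcase]
      exact Finset.insert_eq_self.mpr hbC'
    · rw [if_neg hcase]
      exact Finset.insert_erase hbC'
  have hprem₂ : ∀ c ∈ r.bodyPos, (⟨insert c (hf₂ c), ∅, bf₂ c⟩ : Rule Atom) ∈ Lft P := by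
    intro c hc
    by_cases hcb : c = b
    · subst hcb
      have heq : (⟨insert c (hf₂ c), ∅, bf₂ c⟩ : Rule Atom) = tgC r' hf bf :=
        Rule.ext' hins rfl (by rw [hbfb])
      rw [heq]
      exact hC'
    · rw [hfne c hcb, hbfne c hcb]
      exact hprem c (Finset.mem_union_left _ (Finset.mem_erase.mpr ⟨hcb, hc⟩))
  have hres : tgC r hf₂ bf₂ ∈ Lft P := hr hf₂ bf₂ hprem₂
  -- now show the result equals `tgC ρ hf bf`
  have hsplit2 : r.bodyPos.biUnion hf₂ = hf₂ b ∪ (r.bodyPos.erase b).biUnion hf := by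
    conv_lhs => rw [← Finset.insert_erase hb]
    rw [Finset.biUnion_insert]
    congr 1
    refine Finset.biUnion_congr rfl fun c hc => ?_
    exact hfne c (Finset.mem_erase.mp hc).1
  have hsplit2' : r.bodyPos.biUnion bf₂ = bf₂ b ∪ (r.bodyPos.erase b).biUnion bf := by
    conv_lhs => rw [← Finset.insert_erase hb]
    rw [Finset.biUnion_insert]
    congr 1
    refine Finset.biUnion_congr rfl fun c hc => ?_
    exact hbfne c (Finset.mem_erase.mp hc).1
  have hρbp : ρ.bodyPos.biUnion hf
      = (r.bodyPos.erase b).biUnion hf ∪ r'.bodyPos.biUnion hf := by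
    rw [hρ]
    exact biUnion_union_distrib hf
  have hρbp' : ρ.bodyPos.biUnion bf
      = (r.bodyPos.erase b).biUnion bf ∪ r'.bodyPos.biUnion bf := by
    rw [hρ]
    exact biUnion_union_distrib bf
  have hneg : (tgC r hf₂ bf₂).bodyNeg = (tgC ρ hf bf).bodyNeg := by
    show r.bodyNeg ∪ r.bodyPos.biUnion bf₂ = ρ.bodyNeg ∪ ρ.bodyPos.biUnion bf
    rw [hsplit2', hρbp', hbfb]
    show r.bodyNeg ∪ ((r'.bodyNeg ∪ r'.bodyPos.biUnion bf) ∪ _)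
        = (r.bodyNeg ∪ r'.bodyNeg) ∪ _
    ext x
    simp only [Finset.mem_union]
    tauto
  have hhead : (tgC r hf₂ bf₂).head = (tgC ρ hf bf).head := by
    show r.head ∪ r.bodyPos.biUnion hf₂ = ρ.head ∪ ρ.bodyPos.biUnion hf
    rw [hsplit2, hρbp, hfb]
    show r.head ∪ (_ ∪ (r.bodyPos.erase b).biUnion hf)
        = (r.head ∪ r'.head.erase b) ∪ ((r.bodyPos.erase b).biUnion hf ∪ r'.bodyPos.biUnion hf)
    by_cases hcase : b ∈ (tgC ρ hf bf).head
    · rw [if_pos hcase]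
      have hcaseD : b ∈ r.head ∨ b ∈ (r.bodyPos.erase b).biUnion hf
          ∨ b ∈ r'.bodyPos.biUnion hf := by
        have h1 : b ∈ ρ.head ∪ ρ.bodyPos.biUnion hf := hcase
        rcases Finset.mem_union.mp h1 with h2 | h2
        · rcases Finset.mem_union.mp h2 with h3 | h3
          · exact Or.inl h3
          · exact absurd rfl (Finset.mem_erase.mp h3).1
        · rw [hρbp] at h2
          rcases Finset.mem_union.mp h2 with h3 | h3
          exacts [Or.inr (Or.inl h3), Or.inr (Or.inr h3)]
      show r.head ∪ ((r'.head ∪ r'.bodyPos.biUnion hf) ∪ _) = _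
      ext x
      by_cases hxb : x = b
      · refine iff_of_true ?_ ?_
        · rw [hxb]
          exact Finset.mem_union_right _
            (Finset.mem_union_left _ (Finset.mem_union_left _ hbh))
        · rw [hxb]
          rcases hcaseD with h | h | h
          · exact Finset.mem_union_left _ (Finset.mem_union_left _ h)
          · exact Finset.mem_union_right _ (Finset.mem_union_left _ h)
          · exact Finset.mem_union_right _ (Finset.mem_union_right _ h)
      · simp only [Finset.mem_union, Finset.mem_erase]
        constructor
        · rintro (h | (h | h) | h)
          exacts [Or.inl (Or.inl h), Or.inl (Or.inr ⟨hxb, h⟩), Or.inr (Or.inr h),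
            Or.inr (Or.inl h)]
        · rintro ((h | ⟨-, h⟩) | h | h)
          exacts [Or.inl h, Or.inr (Or.inl (Or.inl h)), Or.inr (Or.inr h),
            Or.inr (Or.inl (Or.inr h))]
    · rw [if_neg hcase]
      have hnb1 : b ∉ r.head := fun h =>
        hcase (Finset.mem_union_left _ (Finset.mem_union_left _ h))
      have hnb2 : b ∉ (r.bodyPos.erase b).biUnion hf := fun h =>
        hcase (Finset.mem_union_right _ (hρbp ▸ Finset.mem_union_left _ h))
      have hnb3 : b ∉ r'.bodyPos.biUnion hf := fun h =>
        hcase (Finset.mem_union_right _ (hρbp ▸ Finset.mem_union_right _ h))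
      show r.head ∪ ((r'.head ∪ r'.bodyPos.biUnion hf).erase b ∪ _) = _
      ext x
      by_cases hxb : x = b
      · constructor
        · intro h
          exfalso
          rw [hxb] at h
          rcases Finset.mem_union.mp h with h | h
          · exact hnb1 h
          rcases Finset.mem_union.mp h with h | h
          · exact (Finset.mem_erase.mp h).1 rfl
          · exact hnb2 h
        · intro h
          exfalso
          rw [hxb] at h
          rcases Finset.mem_union.mp h with h | h
          · rcases Finset.mem_union.mp h with h | h
            · exact hnb1 h
            · exact (Finset.mem_erase.mp h).1 rfl
          · rcases Finset.mem_union.mp h with h | h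
            · exact hnb2 h
            · exact hnb3 h
      · simp only [Finset.mem_union, Finset.mem_erase, ne_eq, hxb, not_false_eq_true,
          true_and]
        constructor
        · rintro (h | (h | h) | h)
          exacts [Or.inl (Or.inl h), Or.inl (Or.inr h), Or.inr (Or.inr h), Or.inr (Or.inl h)]
        · rintro ((h | h) | h | h)
          exacts [Or.inl h, Or.inr (Or.inl (Or.inl h)), Or.inr (Or.inr h),
            Or.inr (Or.inl (Or.inr h))]
  have heq : tgC r hf₂ bf₂ = tgC ρ hf bf := Rule.ext' hhead rfl hneg
  rwa [heq] at hres

/-- The invariant maintained while reducing `P ∪ Lft P` to `Lft P`. -/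
def Inv (P Q : Program Atom) : Prop :=
  IsProgram Q ∧ Lft P ⊆ Q ∧ (∀ r ∈ Q, Snd P r) ∧ (∀ r ∈ Q, r.bodyPos = ∅ → r ∈ Lft P)

section Sem5

variable (S : BDSemantics Atom) (hS : AllowsStar S)
include hS

/-- One stage: eliminate the atom `b` from all positive bodies. -/
lemma sem_stage {P : Program Atom} : ∀ (n : ℕ) (Q : Program Atom) (R : Finset Atom) (b : Atom),
    Inv P Q → (∀ r ∈ Q, r.bodyPos ⊆ R) →
    ((Set.toFinite Q).toFinset.filter (fun r => b ∈ r.bodyPos)).card ≤ n →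
    ∃ Q', S.sem Q = S.sem Q' ∧ Inv P Q' ∧ ∀ r ∈ Q', r.bodyPos ⊆ R.erase b := by
  intro n
  induction n with
  | zero =>
    intro Q R b hInv hsub hcard
    by_cases hz : ∀ r ∈ Q, b ∉ r.bodyPos
    · exact ⟨Q, rfl, hInv, fun r hrq => Finset.subset_erase.mpr ⟨hsub r hrq, hz r hrq⟩⟩
    · exfalso
      push_neg at hz
      obtain ⟨r0, hr0, hbr0⟩ := hz
      have : 0 < ((Set.toFinite Q).toFinset.filter (fun r => b ∈ r.bodyPos)).card := by
        refine Finset.card_pos.mpr ⟨r0, Finset.mem_filter.mpr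
          ⟨(Set.Finite.mem_toFinset _).mpr hr0, hbr0⟩⟩
      omega
  | succ n ih =>
    intro Q R b hInv hsub hcard
    by_cases hz : ∀ r ∈ Q, b ∉ r.bodyPos
    · exact ⟨Q, rfl, hInv, fun r hrq => Finset.subset_erase.mpr ⟨hsub r hrq, hz r hrq⟩⟩
    push_neg at hz
    obtain ⟨r0, hr0, hbr0⟩ := hz
    obtain ⟨hQprog, hLftQ, hSnd, hCf⟩ := hInv
    by_cases htaut : ∃ s ∈ Q, b ∈ s.head ∧ b ∈ s.bodyPos
    · obtain ⟨s, hsQ, hsh, hsb⟩ := htaut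
      have h1 : S.sem Q = S.sem (Q \ {s}) :=
        sem_taut S hS hQprog hsQ ⟨b, Finset.mem_inter.mpr ⟨hsh, hsb⟩⟩
      have hInv' : Inv P (Q \ {s}) := by
        refine ⟨hQprog.mono Set.diff_subset, ?_, fun r hr => hSnd r hr.1,
          fun r hr hcf => hCf r hr.1 hcf⟩
        intro x hx
        refine ⟨hLftQ hx, ?_⟩
        intro hxs
        rw [Set.mem_singleton_iff] at hxs
        subst hxs
        rw [lft_bodyPos hx] at hsb
        simp at hsb
      have hcard' : ((Set.toFinite (Q \ {s})).toFinset.filter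
          (fun r => b ∈ r.bodyPos)).card ≤ n := by
        have hsubF : (Set.toFinite (Q \ {s})).toFinset.filter (fun r => b ∈ r.bodyPos)
            ⊆ ((Set.toFinite Q).toFinset.filter (fun r => b ∈ r.bodyPos)).erase s := by
          intro x hx
          rw [Finset.mem_filter, Set.Finite.mem_toFinset] at hx
          refine Finset.mem_erase.mpr ⟨by simpa using hx.1.2, ?_⟩
          exact Finset.mem_filter.mpr ⟨(Set.Finite.mem_toFinset _).mpr hx.1.1, hx.2⟩
        have h2 := Finset.card_le_card hsubF
        have hsF : s ∈ (Set.toFinite Q).toFinset.filter (fun r => b ∈ r.bodyPos) :=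
          Finset.mem_filter.mpr ⟨(Set.Finite.mem_toFinset _).mpr hsQ, hsb⟩
        have h3 := Finset.card_erase_of_mem hsF
        have h4 := Finset.card_pos.mpr ⟨s, hsF⟩
        omega
      obtain ⟨Q', h2, h3, h4⟩ := ih (Q \ {s}) R b hInv'
        (fun r hr => hsub r hr.1) hcard'
      exact ⟨Q', h1.trans h2, h3, h4⟩
    · push_neg at htaut
      set Q2 : Program Atom := (Q \ {r0}) ∪ resSet Q r0 b with hQ2
      have h1 : S.sem Q = S.sem Q2 := sem_unfold S hS hQprog hr0 hbr0
      have hr0ne : r0 ∉ Lft P := by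
        intro hc
        rw [lft_bodyPos hc] at hbr0
        simp at hbr0
      have hInv2 : Inv P Q2 := by
        refine ⟨isProgram_union (hQprog.mono Set.diff_subset) (isProgram_resSet hQprog hr0),
          ?_, ?_, ?_⟩
        · intro x hx
          exact Or.inl ⟨hLftQ hx, fun hxe => hr0ne (by rwa [Set.mem_singleton_iff.mp hxe] at hx)⟩
        · rintro x (⟨hxQ, -⟩ | ⟨r', hr', hbh', rfl⟩)
          · exact hSnd x hxQ
          · exact snd_res (hSnd r0 hr0) (hSnd r' hr') hbr0 hbh' (htaut r' hr' hbh')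
        · rintro x (⟨hxQ, -⟩ | ⟨r', hr', hbh', rfl⟩) hcf
          · exact hCf x hxQ hcf
          · -- fully-resolved resolvent: a `T_P^G` consequence
            have hcf' : r0.bodyPos.erase b = ∅ ∧ r'.bodyPos = ∅ := by
              constructor
              · exact Finset.subset_empty.mp (hcf ▸ Finset.subset_union_left)
              · exact Finset.subset_empty.mp (hcf ▸ Finset.subset_union_right)
            have hsingle : r0.bodyPos = {b} := by
              ext c
              simp only [Finset.mem_singleton]
              constructor
              · intro hc
                by_contra hcb
                have : c ∈ r0.bodyPos.erase b := Finset.mem_erase.mpr ⟨hcb, hc⟩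
                rw [hcf'.1] at this
                simp at this
              · rintro rfl
                exact hbr0
            have hr'lft : r' ∈ Lft P := hCf r' hr' hcf'.2
            have hres := hSnd r0 hr0 (fun _ => r'.head.erase b) (fun _ => r'.bodyNeg) ?_
            · have heq : tgC r0 (fun _ => r'.head.erase b) (fun _ => r'.bodyNeg)
                  = (⟨r0.head ∪ r'.head.erase b, r0.bodyPos.erase b ∪ r'.bodyPos,
                    r0.bodyNeg ∪ r'.bodyNeg⟩ : Rule Atom) := by
                refine Rule.ext' ?_ ?_ ?_
                · show r0.head ∪ r0.bodyPos.biUnion _ = _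
                  rw [hsingle, Finset.singleton_biUnion]
                · show (∅ : Finset Atom) = _
                  rw [hcf'.1, hcf'.2]
                  simp
                · show r0.bodyNeg ∪ r0.bodyPos.biUnion _ = _
                  rw [hsingle, Finset.singleton_biUnion]
              rwa [heq] at hres
            · intro c hc
              rw [hsingle, Finset.mem_singleton] at hc
              subst hc
              have : (⟨insert c (r'.head.erase c), ∅, r'.bodyNeg⟩ : Rule Atom) = r' :=
                Rule.ext' (Finset.insert_erase hbh') hcf'.2.symm rfl
              rw [this]
              exact hr'lft
      have hsub2 : ∀ x ∈ Q2, x.bodyPos ⊆ R := by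
        rintro x (⟨hxQ, -⟩ | ⟨r', hr', hbh', rfl⟩)
        · exact hsub x hxQ
        · exact Finset.union_subset ((Finset.erase_subset _ _).trans (hsub r0 hr0))
            (hsub r' hr')
      have hcard2 : ((Set.toFinite Q2).toFinset.filter (fun r => b ∈ r.bodyPos)).card ≤ n := by
        have hsubF : (Set.toFinite Q2).toFinset.filter (fun r => b ∈ r.bodyPos)
            ⊆ ((Set.toFinite Q).toFinset.filter (fun r => b ∈ r.bodyPos)).erase r0 := by
          intro x hx
          rw [Finset.mem_filter, Set.Finite.mem_toFinset] at hx
          obtain ⟨hx1, hx2⟩ := hx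
          rcases hx1 with ⟨hxQ, hxr0⟩ | ⟨r', hr', hbh', rfl⟩
          · refine Finset.mem_erase.mpr ⟨by simpa using hxr0, ?_⟩
            exact Finset.mem_filter.mpr ⟨(Set.Finite.mem_toFinset _).mpr hxQ, hx2⟩
          · exfalso
            rcases Finset.mem_union.mp hx2 with h | h
            · exact (Finset.mem_erase.mp h).1 rfl
            · exact htaut r' hr' hbh' h
        have h2 := Finset.card_le_card hsubF
        have hr0F : r0 ∈ (Set.toFinite Q).toFinset.filter (fun r => b ∈ r.bodyPos) :=
          Finset.mem_filter.mpr ⟨(Set.Finite.mem_toFinset _).mpr hr0, hbr0⟩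
        have h3 := Finset.card_erase_of_mem hr0F
        have h4 := Finset.card_pos.mpr ⟨r0, hr0F⟩
        omega
      obtain ⟨Q', h2, h3, h4⟩ := ih Q2 R b hInv2 hsub2 hcard2
      exact ⟨Q', h1.trans h2, h3, h4⟩

lemma sem_elimAll {P : Program Atom} : ∀ (n : ℕ) (R : Finset Atom) (Q : Program Atom),
    R.card ≤ n → Inv P Q → (∀ r ∈ Q, r.bodyPos ⊆ R) → S.sem Q = S.sem (Lft P) := by
  intro n
  induction n with
  | zero =>
    intro R Q hcard hInv hsub
    have hR : R = ∅ := Finset.card_eq_zero.mp (Nat.le_zero.mp hcard)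
    have hQL : Q = Lft P := by
      apply Set.Subset.antisymm
      · intro r hrq
        exact hInv.2.2.2 r hrq (Finset.subset_empty.mp (hR ▸ hsub r hrq))
      · exact hInv.2.1
    rw [hQL]
  | succ n ih =>
    intro R Q hcard hInv hsub
    rcases R.eq_empty_or_nonempty with rfl | ⟨b, hbR⟩
    · exact ih ∅ Q (by simp) hInv hsub
    · obtain ⟨Q', h1, h2, h3⟩ := sem_stage S hS _ Q R b hInv hsub le_rfl
      refine h1.trans (ih (R.erase b) Q' ?_ h2 h3)
      have := Finset.card_erase_of_mem hbR
      have := Finset.card_pos.mpr ⟨b, hbR⟩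
      omega

/-- Key: any semantics allowing `T*_WFS` does not distinguish `P` from `res*(P)`. -/
lemma sem_eq_resStar {P : Program Atom} (hP : IsProgram P) :
    S.sem P = S.sem (resStar P) := by
  have h1 : S.sem (P ∪ Lft P) = S.sem P := sem_add_lft S hS hP
  have hInv0 : Inv P (P ∪ Lft P) := by
    refine ⟨isProgram_lft_union hP subset_rfl, Set.subset_union_right, ?_, ?_⟩
    · rintro r (hr | hr)
      exacts [snd_of_mem hr, snd_of_lft hr]
    · rintro r (hr | hr) hcf
      exacts [cf_mem_lft hr hcf, hr]
  have h2 : S.sem (P ∪ Lft P) = S.sem (Lft P) :=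
    sem_elimAll S hS (Finset.univ : Finset Atom).card Finset.univ (P ∪ Lft P) le_rfl
      hInv0 (fun r _ => Finset.subset_univ _)
  have h3 : S.sem (Lft P) = S.sem (resStar P) := sem_lft_resStar S hS (isProgram_lft hP)
  rw [← h1, h2, h3]

end Sem5

end Aux

/-- For any propositional disjunctive logic program `P`,
`D-WFS*(P) = D-WFS*(res*(P))`: `P` is equivalent to its strong residual program
under the semantics `D-WFS*`. -/
theorem dwfsStar_resStar_eq
    {Atom : Type} [Fintype Atom] [DecidableEq Atom]
    (P : Program Atom) (hP : IsProgram P) :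
    DWFSstar P = DWFSstar (resStar P) := by
  have key : ∀ S : BDSemantics Atom, AllowsStar S → S.sem P = S.sem (resStar P) :=
    fun S hs => sem_eq_resStar S hs hP
  unfold DWFSstar
  ext d
  simp only [Set.mem_iInter, Set.mem_setOf_eq]
  constructor
  · intro h S hs
    rw [← key S hs]
    exact h S hs
  · intro h S hs
    rw [key S hs]
    exact h S hs

end DLP
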